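/- Let n ≥ 3, 0 < q < 1/(n−1), and let u be a positive C³ function on ℝⁿ satisfying −Δu = u^{2^*(q)−1}‖∇u‖^q on ℝⁿ. Define l = u^{−2_*(q)} ‖∇u‖^{2−q} + ((2−q)/2^*(q)) u^{(2−q)/((n−2)(1−q))}. Then at every point where ∇u ≠ 0, l is differentiable and its partial derivatives satisfy ∂ⱼ l = (2−q) u^{−2_*(q)} ‖∇u‖^{−q} (E·∇u)_j for every j. -/

import Mathlib

open MeasureTheory

noncomputable section

/-- The `i`-th partial derivative of `g : ℝⁿ → ℝ`. -/
def pd (n : ℕ) (i : Fin n) (g : EuclideanSpace ℝ (Fin n) → ℝ)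
    (x : EuclideanSpace ℝ (Fin n)) : ℝ :=
  fderiv ℝ g x (EuclideanSpace.single i (1 : ℝ))

/-- The squared Euclidean norm of the gradient of `g`. -/
def gsq (n : ℕ) (g : EuclideanSpace ℝ (Fin n) → ℝ)
    (x : EuclideanSpace ℝ (Fin n)) : ℝ :=
  ∑ i, (pd n i g x) ^ 2

/-- The Euclidean norm of the gradient of `g`. -/
def gnorm (n : ℕ) (g : EuclideanSpace ℝ (Fin n) → ℝ)
    (x : EuclideanSpace ℝ (Fin n)) : ℝ :=
  Real.sqrt (gsq n g x)

/-- The Laplacian of `g` (trace of the Hessian). -/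
def lap (n : ℕ) (g : EuclideanSpace ℝ (Fin n) → ℝ)
    (x : EuclideanSpace ℝ (Fin n)) : ℝ :=
  ∑ i, pd n i (pd n i g) x

/-- The second critical exponent `2^*(q) = ((2-q)/(n-2))(n + q/(1-q))`. -/
def twoStar (n : ℕ) (q : ℝ) : ℝ :=
  (2 - q) / ((n : ℝ) - 2) * ((n : ℝ) + q / (1 - q))

/-- The invariant tensor for the second critical equation. -/
def Ecrit (n : ℕ) (q : ℝ) (u : EuclideanSpace ℝ (Fin n) → ℝ)
    (x : EuclideanSpace ℝ (Fin n)) (i j : Fin n) : ℝ :=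
  pd n i (pd n j u) x
    - (n : ℝ) / (((n : ℝ) - 2) * u x) * (pd n i u x * pd n j u x)
    - q / ((n : ℝ) - ((n : ℝ) - 1) * q) * (lap n u x / gsq n u x)
        * (pd n i u x * pd n j u x)
    - ((1 - q) / ((n : ℝ) - ((n : ℝ) - 1) * q) * lap n u x
        - gsq n u x / (((n : ℝ) - 2) * u x)) * (if i = j then (1 : ℝ) else 0)

/-- The first critical exponent `2_*(q) = ((2-q)/(n-2))(n-1)`. -/
def twoLow (n : ℕ) (q : ℝ) : ℝ := (2 - q) / ((n : ℝ) - 2) * ((n : ℝ) - 1)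

/-- The pseudo-invariant function
`l = u^{-2_*(q)}|∇u|^{2-q} + ((2-q)/2^*(q)) u^{(2-q)/((n-2)(1-q))}`. -/
def lfun (n : ℕ) (q : ℝ) (u : EuclideanSpace ℝ (Fin n) → ℝ)
    (x : EuclideanSpace ℝ (Fin n)) : ℝ :=
  u x ^ (-twoLow n q) * gnorm n u x ^ (2 - q)
    + (2 - q) / twoStar n q * u x ^ ((2 - q) / (((n : ℝ) - 2) * (1 - q)))

lemma pd_contDiff (n : ℕ) (i : Fin n) (u : EuclideanSpace ℝ (Fin n) → ℝ)
    (hu : ContDiff ℝ 3 u) : ContDiff ℝ 2 (pd n i u) := by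
  have h := hu.fderiv_right (m := 2) (by norm_num)
  exact h.clm_apply contDiff_const

lemma pd_symm (n : ℕ) (u : EuclideanSpace ℝ (Fin n) → ℝ) (hu : ContDiff ℝ 3 u)
    (x : EuclideanSpace ℝ (Fin n)) (i j : Fin n) :
    pd n i (pd n j u) x = pd n j (pd n i u) x := by
  have hsymm : IsSymmSndFDerivAt ℝ u x :=
    (hu.contDiffAt).isSymmSndFDerivAt (by norm_num)
  have hd : DifferentiableAt ℝ (fderiv ℝ u) x :=
    ((hu.fderiv_right (m := 2) (by norm_num)).differentiable (by norm_num)).differentiableAt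
  have key : ∀ (k : Fin n) (w : EuclideanSpace ℝ (Fin n)),
      fderiv ℝ (pd n k u) x w = fderiv ℝ (fderiv ℝ u) x w (EuclideanSpace.single k 1) := by
    intro k w
    have : fderiv ℝ (fun y => (fderiv ℝ u y) (EuclideanSpace.single k (1:ℝ))) x
        = (fderiv ℝ (fderiv ℝ u) x).flip (EuclideanSpace.single k 1) := by
      rw [fderiv_clm_apply hd (differentiableAt_const _)]
      simp
    show fderiv ℝ (fun y => (fderiv ℝ u y) (EuclideanSpace.single k (1:ℝ))) x w = _
    rw [this]; rfl
  show fderiv ℝ (pd n j u) x (EuclideanSpace.single i 1)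
      = fderiv ℝ (pd n i u) x (EuclideanSpace.single j 1)
  rw [key, key, hsymm]

lemma gsq_nonneg (n : ℕ) (u : EuclideanSpace ℝ (Fin n) → ℝ)
    (x : EuclideanSpace ℝ (Fin n)) : 0 ≤ gsq n u x :=
  Finset.sum_nonneg fun i _ => sq_nonneg _

lemma hasFDerivAt_gsq (n : ℕ) (u : EuclideanSpace ℝ (Fin n) → ℝ) (hu : ContDiff ℝ 3 u)
    (x : EuclideanSpace ℝ (Fin n)) :
    HasFDerivAt (gsq n u)
      (∑ i, (2 * pd n i u x) • fderiv ℝ (pd n i u) x) x := by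
  have h : ∀ i ∈ Finset.univ, HasFDerivAt (fun y => pd n i u y ^ 2)
      ((2 * pd n i u x) • fderiv ℝ (pd n i u) x) x := by
    intro i _
    have hd : HasFDerivAt (pd n i u) (fderiv ℝ (pd n i u) x) x :=
      (((pd_contDiff n i u hu).differentiable (by norm_num)) x).hasFDerivAt
    have := hd.fun_mul hd
    simpa only [pow_two, two_mul, add_smul] using this
  exact HasFDerivAt.fun_sum h

set_option maxHeartbeats 1000000 in
lemma key_identity (N q a g P S A B K T : ℝ)
    (hT : T = (2 - q) / (N - 2) * (N + q / (1 - q)))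
    (hN2 : N - 2 ≠ 0) (h1q : 1 - q ≠ 0)
    (hD : N - (N-1)*q ≠ 0) (h2q : 2 - q ≠ 0) (hnq : N + q / (1 - q) ≠ 0)
    (ha : a ≠ 0) (hg : g ≠ 0) (hK : K ≠ 0) :
    A * ((2 - q)/2 * K⁻¹ * (2 * S))
      + g / K * (-((2-q)/(N-2)*(N-1)) * (A / a) * P)
      + (2 - q) / T * ((2-q)/((N-2)*(1-q)) * (A * B) * P)
    = (2 - q) * A * K⁻¹ *
      (S - N / ((N-2)*a) * (g*P)
        - q/(N-(N-1)*q) * (-(B*K)/g) * (g*P)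
        - ((1-q)/(N-(N-1)*q) * (-(B*K)) - g/((N-2)*a)) * P) := by
  have hTne : T ≠ 0 := by
    rw [hT]; exact mul_ne_zero (div_ne_zero h2q hN2) hnq
  have hcoef : (2 - q)/T * ((2-q)/((N-2)*(1-q))) = (2-q)/(N-(N-1)*q) := by
    rw [div_mul_div_comm,
      div_eq_div_iff (mul_ne_zero hTne (mul_ne_zero hN2 h1q)) hD, hT]
    field_simp
    ring
  have h3 : (2 - q)/T * ((2-q)/((N-2)*(1-q)) * (A*B) * P)
      = (2-q)/(N-(N-1)*q) * (A*B*P) := by rw [← hcoef]; ring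
  rw [h3]
  field_simp
  ring


/-- At every point where `∇u ≠ 0`, the pseudo-invariant function `l` is
differentiable and `∂ⱼl = (2-q) u^{-2_*(q)} |∇u|^{-q} (E·∇u)_j`. -/
theorem stmt_12 (n : ℕ) (hn : 3 ≤ n) (q : ℝ) (hq0 : 0 < q)
    (hq1 : q < 1 / ((n : ℝ) - 1))
    (u : EuclideanSpace ℝ (Fin n) → ℝ) (hu : ContDiff ℝ 3 u) (hupos : ∀ x, 0 < u x)
    (heq : ∀ x, -lap n u x = u x ^ (twoStar n q - 1) * gnorm n u x ^ q) :
    ∀ x, gsq n u x ≠ 0 →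
      DifferentiableAt ℝ (lfun n q u) x ∧
        ∀ j, pd n j (lfun n q u) x
          = (2 - q) * u x ^ (-twoLow n q) * gnorm n u x ^ (-q)
              * ∑ i, Ecrit n q u x i j * pd n i u x := by
  intro x hgx
  -- numeric facts
  have hn3 : (3:ℝ) ≤ (n:ℝ) := by exact_mod_cast hn
  have hn2 : (0:ℝ) < (n:ℝ) - 2 := by linarith
  have hn1 : (0:ℝ) < (n:ℝ) - 1 := by linarith
  have hq1' : q * ((n:ℝ) - 1) < 1 := by
    have := (lt_div_iff₀ hn1).mp hq1; linarith
  have h1q : 0 < 1 - q := by nlinarith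
  have h2q : (0:ℝ) < 2 - q := by nlinarith
  have hD : (0:ℝ) < (n:ℝ) - ((n:ℝ) - 1) * q := by nlinarith
  have ha : 0 < u x := hupos x
  have hg : 0 < gsq n u x := lt_of_le_of_ne (gsq_nonneg n u x) (Ne.symm hgx)
  have hnq : (0:ℝ) < (n:ℝ) + q / (1 - q) := by
    have := div_pos hq0 h1q; linarith
  -- derivatives
  have hud : HasFDerivAt u (fderiv ℝ u x) x :=
    ((hu.differentiable (by norm_num)) x).hasFDerivAt
  have hgsqd := hasFDerivAt_gsq n u hu x
  set α : ℝ := (2 - q) / (((n : ℝ) - 2) * (1 - q)) with hα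
  have hW : lfun n q u = fun y =>
      u y ^ (-twoLow n q) * gsq n u y ^ ((2 - q)/2 : ℝ)
        + (2 - q) / twoStar n q * u y ^ α := by
    funext y
    rw [lfun, gnorm, Real.sqrt_eq_rpow, ← Real.rpow_mul (gsq_nonneg n u y),
      show (1/2 : ℝ) * (2 - q) = (2 - q)/2 by ring]
  have h1 : HasFDerivAt (fun y => u y ^ (-twoLow n q))
      ((-twoLow n q * u x ^ (-twoLow n q - 1)) • fderiv ℝ u x) x :=
    hud.rpow_const (Or.inl ha.ne')
  have h2 : HasFDerivAt (fun y => gsq n u y ^ ((2 - q)/2 : ℝ))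
      (((2 - q)/2 * gsq n u x ^ ((2 - q)/2 - 1)) •
        (∑ i, (2 * pd n i u x) • fderiv ℝ (pd n i u) x)) x :=
    hgsqd.rpow_const (Or.inl hg.ne')
  have h3 : HasFDerivAt (fun y => u y ^ α)
      ((α * u x ^ (α - 1)) • fderiv ℝ u x) x :=
    hud.rpow_const (Or.inl ha.ne')
  have hWd := (h1.fun_mul h2).fun_add (h3.const_mul ((2 - q) / twoStar n q))
  constructor
  · rw [hW]; exact hWd.differentiableAt
  intro j
  have e_u : fderiv ℝ u x (EuclideanSpace.single j (1:ℝ)) = pd n j u x := rfl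
  have e_p : ∀ i : Fin n, (fderiv ℝ (pd n i u) x) (EuclideanSpace.single j (1:ℝ))
      = pd n j (pd n i u) x := fun i => rfl
  have hstep : pd n j (lfun n q u) x
      = u x ^ (-twoLow n q) * ((2 - q)/2 * gsq n u x ^ ((2 - q)/2 - 1 : ℝ)
            * (∑ i, 2 * pd n i u x * pd n j (pd n i u) x))
        + gsq n u x ^ ((2 - q)/2 : ℝ)
            * (-twoLow n q * u x ^ (-twoLow n q - 1) * pd n j u x)
        + (2 - q) / twoStar n q * (α * u x ^ (α - 1) * pd n j u x) := by
    rw [pd, hW, hWd.fderiv]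
    simp only [ContinuousLinearMap.add_apply, ContinuousLinearMap.smul_apply,
      ContinuousLinearMap.coe_sum', Finset.sum_apply, smul_eq_mul, e_u, e_p]
  have hsum2 : (∑ i, 2 * pd n i u x * pd n j (pd n i u) x)
      = 2 * ∑ i, pd n i (pd n j u) x * pd n i u x := by
    rw [Finset.mul_sum]
    exact Finset.sum_congr rfl fun i _ => by rw [pd_symm n u hu x i j]; ring
  have haux : ∀ c : ℝ, (∑ i, c * (pd n i u x * pd n j u x) * pd n i u x)
      = c * (gsq n u x * pd n j u x) := by
    intro c
    calc (∑ i, c * (pd n i u x * pd n j u x) * pd n i u x)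
        = ∑ i, c * pd n j u x * pd n i u x ^ 2 :=
          Finset.sum_congr rfl fun i _ => by ring
      _ = c * pd n j u x * ∑ i, pd n i u x ^ 2 := (Finset.mul_sum _ _ _).symm
      _ = c * (gsq n u x * pd n j u x) := by rw [gsq]; ring
  have hite : ∀ c : ℝ, (∑ i, c * (if i = j then (1:ℝ) else 0) * pd n i u x)
      = c * pd n j u x := by
    intro c
    simp [mul_ite, ite_mul, Finset.sum_ite_eq']
  have hE : (∑ i, Ecrit n q u x i j * pd n i u x)
      = (∑ i, pd n i (pd n j u) x * pd n i u x)
        - (n : ℝ) / (((n : ℝ) - 2) * u x) * (gsq n u x * pd n j u x)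
        - q / ((n : ℝ) - ((n : ℝ) - 1) * q) * (lap n u x / gsq n u x)
            * (gsq n u x * pd n j u x)
        - ((1 - q) / ((n : ℝ) - ((n : ℝ) - 1) * q) * lap n u x
            - gsq n u x / (((n : ℝ) - 2) * u x)) * pd n j u x := by
    simp only [Ecrit, sub_mul, Finset.sum_sub_distrib, haux, hite]
  -- rpow manipulations
  have r1 : u x ^ (-twoLow n q - 1 : ℝ) = u x ^ (-twoLow n q) / u x := by
    rw [Real.rpow_sub ha, Real.rpow_one]
  have r2 : gsq n u x ^ ((2 - q)/2 : ℝ)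
      = gsq n u x / gsq n u x ^ (q/2 : ℝ) := by
    rw [show ((2 - q)/2 : ℝ) = 1 - q/2 by ring, Real.rpow_sub hg, Real.rpow_one]
  have r3 : gsq n u x ^ ((2 - q)/2 - 1 : ℝ) = (gsq n u x ^ (q/2 : ℝ))⁻¹ := by
    rw [show ((2 - q)/2 - 1 : ℝ) = -(q/2) by ring, Real.rpow_neg hg.le]
  have r4 : gnorm n u x ^ (-q : ℝ) = (gsq n u x ^ (q/2 : ℝ))⁻¹ := by
    rw [gnorm, Real.sqrt_eq_rpow, ← Real.rpow_mul hg.le,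
      show (1/2 : ℝ) * (-q) = -(q/2) by ring, Real.rpow_neg hg.le]
  have r5 : gnorm n u x ^ (q : ℝ) = gsq n u x ^ (q/2 : ℝ) := by
    rw [gnorm, Real.sqrt_eq_rpow, ← Real.rpow_mul hg.le,
      show (1/2 : ℝ) * q = q/2 by ring]
  have r6 : u x ^ (α - 1 : ℝ) = u x ^ (-twoLow n q) * u x ^ (twoStar n q - 1) := by
    have hexp : α - 1 = -twoLow n q + (twoStar n q - 1) := by
      rw [hα, twoLow, twoStar]
      field_simp
      ring
    rw [hexp, Real.rpow_add ha]
  have hPDE : lap n u x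
      = -(u x ^ (twoStar n q - 1) * gsq n u x ^ (q/2 : ℝ)) := by
    have h := heq x
    rw [r5] at h
    linarith
  have hK : gsq n u x ^ (q/2 : ℝ) ≠ 0 := (Real.rpow_pos_of_pos hg _).ne'
  rw [hstep, hsum2, hE, r1, r2, r3, r4, r6, hPDE]
  simp only [twoLow]
  exact key_identity (n:ℝ) q (u x) (gsq n u x) (pd n j u x) _ _ _ _
    (twoStar n q) (by rw [twoStar]) hn2.ne' h1q.ne' hD.ne' h2q.ne' hnq.ne'
    ha.ne' hg.ne' hK
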